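/- Let K₁, K₂, …, K_n be compact subsets of ℂ^N, each polynomially convex, and suppose that for every i, the set K_i is separated by a real affine hyperplane from K₁ ∪ … ∪ K_{i−1} (i.e. K_i and the union of the previous sets lie in the two distinct open half-spaces of some hyperplane). Then K₁ ∪ … ∪ K_n is polynomially convex. -/

import Mathlib

set_option maxHeartbeats 1000000

open Set Polynomial

noncomputable section

/-- `g` is uniformly approximable by polynomials on `S`. -/
def PApprox (S : Set ℂ) (g : ℂ → ℂ) : Prop :=
  ∀ η : ℝ, 0 < η → ∃ p : Polynomial ℂ, ∀ ζ ∈ S, ‖g ζ - p.eval ζ‖ ≤ η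

lemma papprox_poly (S : Set ℂ) (p : Polynomial ℂ) : PApprox S (fun ζ => p.eval ζ) :=
  fun η hη => ⟨p, fun ζ _ => by simp [le_of_lt hη]⟩

lemma papprox_const (S : Set ℂ) (c : ℂ) : PApprox S (fun _ => c) := by
  have := papprox_poly S (Polynomial.C c)
  simpa using this

lemma PApprox.congr {S : Set ℂ} {g h : ℂ → ℂ} (hg : PApprox S g)
    (e : ∀ ζ ∈ S, g ζ = h ζ) : PApprox S h := by
  intro η hη
  obtain ⟨p, hp⟩ := hg η hη
  exact ⟨p, fun ζ hζ => by rw [← e ζ hζ]; exact hp ζ hζ⟩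

lemma PApprox.add {S : Set ℂ} {g h : ℂ → ℂ} (hg : PApprox S g) (hh : PApprox S h) :
    PApprox S (fun ζ => g ζ + h ζ) := by
  intro η hη
  obtain ⟨p, hp⟩ := hg (η/2) (by positivity)
  obtain ⟨q, hq⟩ := hh (η/2) (by positivity)
  refine ⟨p + q, fun ζ hζ => ?_⟩
  have h1 := hp ζ hζ; have h2 := hq ζ hζ
  have : g ζ + h ζ - (p + q).eval ζ = (g ζ - p.eval ζ) + (h ζ - q.eval ζ) := by
    simp; ring
  rw [this]
  calc ‖(g ζ - p.eval ζ) + (h ζ - q.eval ζ)‖ ≤ ‖g ζ - p.eval ζ‖ + ‖h ζ - q.eval ζ‖ :=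
        norm_add_le _ _
    _ ≤ η/2 + η/2 := add_le_add h1 h2
    _ = η := by ring

lemma PApprox.smul {S : Set ℂ} {g : ℂ → ℂ} (c : ℂ) (hg : PApprox S g) :
    PApprox S (fun ζ => c * g ζ) := by
  intro η hη
  obtain ⟨p, hp⟩ := hg (η / (‖c‖ + 1)) (by positivity)
  refine ⟨Polynomial.C c * p, fun ζ hζ => ?_⟩
  have h1 := hp ζ hζ
  have : c * g ζ - (Polynomial.C c * p).eval ζ = c * (g ζ - p.eval ζ) := by simp; ring
  rw [this, norm_mul]
  calc ‖c‖ * ‖g ζ - p.eval ζ‖ ≤ ‖c‖ * (η / (‖c‖ + 1)) := by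
        exact mul_le_mul_of_nonneg_left h1 (norm_nonneg c)
    _ ≤ η := by
        rw [mul_div_assoc']
        rw [div_le_iff₀ (by positivity)]
        nlinarith [norm_nonneg c, le_of_lt hη]

lemma PApprox.mul {S : Set ℂ} {g h : ℂ → ℂ} {Cg Ch : ℝ}
    (hgb : ∀ ζ ∈ S, ‖g ζ‖ ≤ Cg) (hhb : ∀ ζ ∈ S, ‖h ζ‖ ≤ Ch)
    (hg : PApprox S g) (hh : PApprox S h) : PApprox S (fun ζ => g ζ * h ζ) := by
  intro η hη
  -- Cg, Ch may be assumed nonneg if S nonempty; handle S empty separately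
  rcases S.eq_empty_or_nonempty with rfl | ⟨ζ₀, hζ₀⟩
  · exact ⟨0, fun ζ hζ => absurd hζ (notMem_empty ζ)⟩
  have hCg : 0 ≤ Cg := le_trans (norm_nonneg _) (hgb ζ₀ hζ₀)
  have hCh : 0 ≤ Ch := le_trans (norm_nonneg _) (hhb ζ₀ hζ₀)
  obtain ⟨q, hq⟩ := hh (min 1 (η / (2*(Cg+1)))) (by positivity)
  obtain ⟨p, hp⟩ := hg (η / (2*(Ch+2))) (by positivity)
  refine ⟨p * q, fun ζ hζ => ?_⟩
  have h1 := hp ζ hζ; have h2 := hq ζ hζ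
  have hqb : ‖q.eval ζ‖ ≤ Ch + 1 := by
    calc ‖q.eval ζ‖ = ‖h ζ - (h ζ - q.eval ζ)‖ := by ring_nf
      _ ≤ ‖h ζ‖ + ‖h ζ - q.eval ζ‖ := norm_sub_le _ _
      _ ≤ Ch + 1 := add_le_add (hhb ζ hζ) (le_trans h2 (min_le_left _ _))
  have key : g ζ * h ζ - (p*q).eval ζ = g ζ * (h ζ - q.eval ζ) + q.eval ζ * (g ζ - p.eval ζ) := by
    simp; ring
  rw [key]
  have e1 : ‖g ζ * (h ζ - q.eval ζ)‖ ≤ Cg * (η / (2*(Cg+1))) := by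
    rw [norm_mul]
    exact mul_le_mul (hgb ζ hζ) (le_trans h2 (min_le_right _ _)) (norm_nonneg _) hCg
  have e2 : ‖q.eval ζ * (g ζ - p.eval ζ)‖ ≤ (Ch+1) * (η / (2*(Ch+2))) := by
    rw [norm_mul]
    exact mul_le_mul hqb h1 (norm_nonneg _) (by linarith)
  calc ‖g ζ * (h ζ - q.eval ζ) + q.eval ζ * (g ζ - p.eval ζ)‖
      ≤ ‖g ζ * (h ζ - q.eval ζ)‖ + ‖q.eval ζ * (g ζ - p.eval ζ)‖ := norm_add_le _ _
    _ ≤ Cg * (η / (2*(Cg+1))) + (Ch+1) * (η / (2*(Ch+2))) := add_le_add e1 e2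
    _ ≤ η/2 + η/2 := by
        have b1 : Cg * (η / (2*(Cg+1))) ≤ η/2 := by
          rw [mul_div_assoc', div_le_iff₀ (by positivity)]
          nlinarith
        have b2 : (Ch+1) * (η / (2*(Ch+2))) ≤ η/2 := by
          rw [mul_div_assoc', div_le_iff₀ (by positivity)]
          nlinarith
        exact add_le_add b1 b2
    _ = η := by ring

lemma PApprox.pow {S : Set ℂ} {g : ℂ → ℂ} {C : ℝ}
    (hgb : ∀ ζ ∈ S, ‖g ζ‖ ≤ C) (hg : PApprox S g) :
    ∀ n : ℕ, PApprox S (fun ζ => (g ζ)^n) := by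
  intro n
  induction n with
  | zero => exact (papprox_const S 1).congr (by simp)
  | succ k ih =>
      rcases S.eq_empty_or_nonempty with rfl | ⟨ζ₀, hζ₀⟩
      · exact fun η hη => ⟨0, fun ζ hζ => absurd hζ (notMem_empty ζ)⟩
      have hC : 0 ≤ C := le_trans (norm_nonneg _) (hgb ζ₀ hζ₀)
      have hb : ∀ ζ ∈ S, ‖(g ζ)^k‖ ≤ C^k := by
        intro ζ hζ
        rw [norm_pow]
        exact pow_le_pow_left₀ (norm_nonneg _) (hgb ζ hζ) k
      exact (PApprox.mul hb hgb ih hg).congr (fun ζ _ => by rw [← pow_succ])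

lemma papprox_finsum {S : Set ℂ} {ι : Type*} (t : Finset ι) (f : ι → ℂ → ℂ)
    (hf : ∀ i ∈ t, PApprox S (f i)) : PApprox S (fun ζ => ∑ i ∈ t, f i ζ) := by
  classical
  induction t using Finset.induction_on with
  | empty => exact (papprox_const S 0).congr (by simp)
  | insert a t' hnotmem ih =>
      have h1 : PApprox S (f a) := hf a (Finset.mem_insert_self a t')
      have h2 : PApprox S (fun ζ => ∑ i ∈ t', f i ζ) :=
        ih (fun i hi => hf i (Finset.mem_insert_of_mem hi))
      exact (h1.add h2).congr (fun ζ _ => by rw [Finset.sum_insert hnotmem])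

def Complex.abs : AbsoluteValue ℂ ℝ := NormedField.toAbsoluteValue ℂ
lemma Complex.sq_abs (z : ℂ) : Complex.abs z ^ 2 = Complex.normSq z := Complex.sq_norm z
lemma Complex.abs_re_le_abs (z : ℂ) : |z.re| ≤ Complex.abs z := Complex.abs_re_le_norm z
lemma Complex.re_le_abs (z : ℂ) : z.re ≤ Complex.abs z := Complex.re_le_norm z
lemma Complex.abs_I : Complex.abs Complex.I = 1 := Complex.norm_I
lemma Complex.abs_ofReal (r : ℝ) : Complex.abs r = |r| := Complex.norm_real r
lemma Complex.norm_eq_abs (z : ℂ) : ‖z‖ = Complex.abs z := rfl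

section Sep

variable {ε R : ℝ} {S : Set ℂ}

/-- points of `S` stay away from the imaginary axis and are bounded. -/
def SepSet (ε R : ℝ) (S : Set ℂ) : Prop :=
  ∀ ζ ∈ S, Complex.abs ζ ≤ R ∧ ε ≤ |ζ.re|

lemma sep_ne {a ζ : ℂ} (hε : 0 < ε) (hS : SepSet ε R S) (ha : a.re = 0) (hζ : ζ ∈ S) :
    ζ - a ≠ 0 := by
  intro h
  have : ζ.re - a.re = 0 := by rw [← Complex.sub_re, h]; simp
  have h1 : ζ.re = 0 := by linarith [this, ha.symm ▸ this]
  have := (hS ζ hζ).2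
  rw [h1] at this; simp at this; linarith

lemma sep_inv_bound {a ζ : ℂ} (hε : 0 < ε) (hS : SepSet ε R S) (ha : a.re = 0) (hζ : ζ ∈ S) :
    ‖(ζ - a)⁻¹‖ ≤ ε⁻¹ := by
  rw [norm_inv]
  have h1 : ε ≤ ‖ζ - a‖ := by
    have h2 : |(ζ - a).re| ≤ Complex.abs (ζ - a) := Complex.abs_re_le_abs _
    have h3 : (ζ - a).re = ζ.re := by rw [Complex.sub_re, ha]; ring
    have h4 := (hS ζ hζ).2
    rw [h3] at h2
    calc ε ≤ |ζ.re| := h4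
      _ ≤ Complex.abs (ζ - a) := h2
  exact inv_anti₀ hε h1

/-- Far pole: `|a| ≥ 2R` with `a` on the imaginary axis. -/
lemma papprox_inv_far (hε : 0 < ε) (hεR : ε ≤ R) (hS : SepSet ε R S)
    (a : ℂ) (ha : a.re = 0) (haR : 2*R ≤ Complex.abs a) :
    PApprox S (fun ζ => (ζ - a)⁻¹) := by
  intro η hη
  have hR : 0 < R := lt_of_lt_of_le hε hεR
  have ha0 : a ≠ 0 := by
    intro h; rw [h] at haR; simp at haR; linarith
  obtain ⟨m, hm⟩ := exists_pow_lt_of_lt_one (show (0:ℝ) < η * ε by positivity)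
    (show (1:ℝ)/2 < 1 by norm_num)
  refine ⟨∑ k ∈ Finset.range m, Polynomial.C (-(a⁻¹^(k+1))) * Polynomial.X^k, fun ζ hζ => ?_⟩
  have hζa : ζ - a ≠ 0 := sep_ne hε hS ha hζ
  have heval : Polynomial.eval ζ (∑ k ∈ Finset.range m, Polynomial.C (-(a⁻¹^(k+1))) * Polynomial.X^k)
      = ∑ k ∈ Finset.range m, (-(a⁻¹^(k+1))) * ζ^k := by
    rw [Polynomial.eval_finset_sum]
    exact Finset.sum_congr rfl fun k _ => by simp
  rw [heval]
  have key : (ζ - a)⁻¹ - (∑ k ∈ Finset.range m, (-(a⁻¹^(k+1))) * ζ^k) = (ζ/a)^m * (ζ-a)⁻¹ := by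
    set s := ∑ k ∈ Finset.range m, (ζ/a)^k with hs
    have hg := geom_sum_mul (ζ/a) m
    have hsum : (∑ k ∈ Finset.range m, (-(a⁻¹^(k+1))) * ζ^k) = -a⁻¹ * s := by
      rw [hs, Finset.mul_sum]
      refine Finset.sum_congr rfl fun k _ => ?_
      rw [div_pow, div_eq_mul_inv, inv_pow]
      ring
    have key2 : (ζ - a) * (-a⁻¹ * s) = 1 - (ζ/a)^m := by
      linear_combination -hg + s * mul_inv_cancel₀ ha0
    rw [hsum]
    have : (ζ-a)⁻¹ - (-a⁻¹ * s) = (ζ-a)⁻¹ * (1 - (ζ - a) * (-a⁻¹ * s)) := by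
      field_simp
    rw [this, key2]
    ring
  rw [key]
  have h1 : Complex.abs (ζ/a) ≤ 1/2 := by
    rw [map_div₀]
    rw [div_le_iff₀ (Complex.abs.pos ha0)]
    calc Complex.abs ζ ≤ R := (hS ζ hζ).1
      _ ≤ 1/2 * (2*R) := by ring_nf; rfl
      _ ≤ 1/2 * Complex.abs a := by linarith [haR]
  have h2 : ‖(ζ - a)⁻¹‖ ≤ ε⁻¹ := sep_inv_bound hε hS ha hζ
  rw [norm_mul, norm_pow]
  calc ‖ζ/a‖^m * ‖(ζ-a)⁻¹‖ ≤ (1/2)^m * ε⁻¹ := by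
        exact mul_le_mul (pow_le_pow_left₀ (norm_nonneg _) h1 m) h2 (norm_nonneg _)
          (by positivity)
    _ ≤ (η * ε) * ε⁻¹ := by
        exact mul_le_mul_of_nonneg_right (le_of_lt hm) (by positivity)
    _ = η := by field_simp

end Sep

section Sep2

variable {ε R : ℝ} {S : Set ℂ}

lemma abs_of_re_zero (z : ℂ) (h : z.re = 0) : Complex.abs z = |z.im| := by
  have hsq : (Complex.abs z)^2 = z.im^2 := by
    rw [Complex.sq_abs, Complex.normSq_apply, h]; ring
  have := congrArg Real.sqrt hsq
  rwa [Real.sqrt_sq (Complex.abs.nonneg z), Real.sqrt_sq_eq_abs] at this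

lemma papprox_inv_step (hε : 0 < ε) (hεR : ε ≤ R) (hS : SepSet ε R S) :
    ∀ (k : ℕ) (a : ℂ), a.re = 0 → 2*R ≤ Complex.abs a + k * (ε/2) →
      PApprox S (fun ζ => (ζ - a)⁻¹) := by
  intro k
  induction k with
  | zero =>
      intro a ha haR
      exact papprox_inv_far hε hεR hS a ha (by simpa using haR)
  | succ k ih =>
      intro a ha haR
      by_cases hfar : 2*R ≤ Complex.abs a
      · exact papprox_inv_far hε hεR hS a ha hfar
      -- push the pole
      set σ : ℝ := if 0 ≤ a.im then (ε/2) else (-(ε/2)) with hσ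
      have habs_σ : |σ| = ε/2 := by
        rw [hσ]; split_ifs <;> simp [abs_of_nonneg, abs_of_nonpos, le_of_lt hε] <;> linarith
      set b : ℂ := a + (σ : ℂ) * Complex.I with hb
      have hbre : b.re = 0 := by
        rw [hb]; simp [Complex.add_re, Complex.mul_re, ha]
      have hbim : b.im = a.im + σ := by
        rw [hb]; simp [Complex.add_im, Complex.mul_im]
      have habs_b : Complex.abs b = Complex.abs a + ε/2 := by
        rw [abs_of_re_zero b hbre, abs_of_re_zero a ha, hbim, hσ]
        split_ifs with him
        · rw [abs_of_nonneg him, abs_of_nonneg (by linarith)]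
        · push_neg at him
          rw [abs_of_neg him, abs_of_neg (by linarith)]; ring
      have hab : Complex.abs (a - b) = ε/2 := by
        have : a - b = -((σ:ℂ) * Complex.I) := by rw [hb]; ring
        rw [this, map_neg_eq_map, map_mul, Complex.abs_I, Complex.abs_ofReal, habs_σ]
        ring
      have hIH : PApprox S (fun ζ => (ζ - b)⁻¹) := by
        refine ih b hbre ?_
        rw [habs_b]
        push_cast at haR ⊢
        linarith
      intro η hη
      obtain ⟨m, hm⟩ := exists_pow_lt_of_lt_one (show (0:ℝ) < (η/2) * ε by positivity)
        (show (1:ℝ)/2 < 1 by norm_num)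
      -- the intermediate rational approximation
      set F : ℂ → ℂ := fun ζ => ∑ j ∈ Finset.range m, (a-b)^j * ((ζ - b)⁻¹)^(j+1) with hF
      have hFap : PApprox S F := by
        refine papprox_finsum (Finset.range m) _ (fun j _ => ?_)
        have hpow : PApprox S (fun ζ => ((ζ - b)⁻¹)^(j+1)) :=
          PApprox.pow (C := ε⁻¹) (fun ζ hζ => sep_inv_bound hε hS hbre hζ) hIH (j+1)
        exact PApprox.smul _ hpow
      obtain ⟨p, hp⟩ := hFap (η/2) (by positivity)
      refine ⟨p, fun ζ hζ => ?_⟩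
      have hζa : ζ - a ≠ 0 := sep_ne hε hS ha hζ
      have hζb : ζ - b ≠ 0 := sep_ne hε hS hbre hζ
      have key : (ζ - a)⁻¹ - F ζ = ((a-b) * (ζ-b)⁻¹)^m * (ζ-a)⁻¹ := by
        set u := (ζ - b)⁻¹ with hu'
        have hu : (ζ - b) * u = 1 := mul_inv_cancel₀ hζb
        set s := ∑ j ∈ Finset.range m, ((a-b)*u)^j with hs
        have hg := geom_sum_mul ((a-b)*u) m
        have hFs : F ζ = u * s := by
          rw [hF, hs, Finset.mul_sum]
          refine Finset.sum_congr rfl fun j _ => ?_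
          rw [mul_pow]; ring
        have key2 : (ζ - a) * (u * s) = 1 - ((a-b)*u)^m := by
          linear_combination -hg + s * hu
        rw [hFs]
        have : (ζ-a)⁻¹ - u * s = (ζ-a)⁻¹ * (1 - (ζ - a) * (u * s)) := by
          field_simp
        rw [this, key2]
        ring
      calc ‖(ζ - a)⁻¹ - p.eval ζ‖
          ≤ ‖(ζ - a)⁻¹ - F ζ‖ + ‖F ζ - p.eval ζ‖ := by
            have : (ζ - a)⁻¹ - p.eval ζ = ((ζ - a)⁻¹ - F ζ) + (F ζ - p.eval ζ) := by ring
            rw [this]; exact norm_add_le _ _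
        _ ≤ (η/2) + (η/2) := by
            refine add_le_add ?_ (hp ζ hζ)
            rw [key, norm_mul, norm_pow, norm_mul]
            have h1 : ‖(a-b : ℂ)‖ * ‖(ζ-b)⁻¹‖ ≤ 1/2 := by
              have e1 : ‖(a-b : ℂ)‖ = ε/2 := hab
              have e2 : ‖(ζ-b)⁻¹‖ ≤ ε⁻¹ := sep_inv_bound hε hS hbre hζ
              calc ‖(a-b : ℂ)‖ * ‖(ζ-b)⁻¹‖ ≤ (ε/2) * ε⁻¹ := by
                    rw [e1]; exact mul_le_mul_of_nonneg_left e2 (by positivity)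
                _ = 1/2 := by field_simp
            have h2 : ‖(ζ-a)⁻¹‖ ≤ ε⁻¹ := sep_inv_bound hε hS ha hζ
            calc (‖(a-b:ℂ)‖ * ‖(ζ-b)⁻¹‖)^m * ‖(ζ-a)⁻¹‖ ≤ (1/2)^m * ε⁻¹ :=
                  mul_le_mul (pow_le_pow_left₀ (by positivity) h1 m) h2 (norm_nonneg _)
                    (by positivity)
              _ ≤ ((η/2) * ε) * ε⁻¹ := mul_le_mul_of_nonneg_right (le_of_lt hm) (by positivity)
              _ = η/2 := by field_simp
        _ = η := by ring

lemma papprox_inv_axis (hε : 0 < ε) (hεR : ε ≤ R) (hS : SepSet ε R S)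
    (a : ℂ) (ha : a.re = 0) : PApprox S (fun ζ => (ζ - a)⁻¹) := by
  obtain ⟨k, hk⟩ := exists_nat_ge (2*R / (ε/2))
  refine papprox_inv_step hε hεR hS k a ha ?_
  have h1 : 2*R ≤ k * (ε/2) := by
    rw [div_le_iff₀ (by positivity)] at hk
    linarith
  have := Complex.abs.nonneg a
  linarith

end Sep2

section Sep3

variable {ε R : ℝ} {S : Set ℂ}

lemma msprod_bound (hε : 0 < ε) (hS : SepSet ε R S) :
    ∀ (m : Multiset ℂ), (∀ r ∈ m, r.re = 0) → ∀ ζ ∈ S,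
      ‖(m.map fun r => (ζ - r)⁻¹).prod‖ ≤ ε⁻¹ ^ Multiset.card m := by
  intro m
  induction m using Multiset.induction_on with
  | empty => intro _ ζ hζ; simp
  | cons r m ih =>
      intro hm ζ hζ
      rw [Multiset.map_cons, Multiset.prod_cons, Multiset.card_cons]
      rw [norm_mul, pow_succ]
      have h1 : ‖(ζ - r)⁻¹‖ ≤ ε⁻¹ :=
        sep_inv_bound hε hS (hm r (Multiset.mem_cons_self r m)) hζ
      have h2 := ih (fun x hx => hm x (Multiset.mem_cons_of_mem hx)) ζ hζ
      calc ‖(ζ - r)⁻¹‖ * ‖(m.map fun r => (ζ - r)⁻¹).prod‖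
          ≤ ε⁻¹ * (ε⁻¹ ^ Multiset.card m) :=
            mul_le_mul h1 h2 (norm_nonneg _) (by positivity)
        _ = ε⁻¹ ^ Multiset.card m * ε⁻¹ := by ring

lemma papprox_msprod (hε : 0 < ε) (hεR : ε ≤ R) (hS : SepSet ε R S) :
    ∀ (m : Multiset ℂ), (∀ r ∈ m, r.re = 0) →
      PApprox S (fun ζ => (m.map fun r => (ζ - r)⁻¹).prod) := by
  intro m
  induction m using Multiset.induction_on with
  | empty => exact fun _ => (papprox_const S 1).congr (by simp)
  | cons r m ih =>
      intro hm
      have h1 : PApprox S (fun ζ => (ζ - r)⁻¹) :=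
        papprox_inv_axis hε hεR hS r (hm r (Multiset.mem_cons_self r m))
      have h2 := ih (fun x hx => hm x (Multiset.mem_cons_of_mem hx))
      have hmul := PApprox.mul (Cg := ε⁻¹) (Ch := ε⁻¹ ^ Multiset.card m)
        (fun ζ hζ => sep_inv_bound hε hS (hm r (Multiset.mem_cons_self r m)) hζ)
        (fun ζ hζ => msprod_bound hε hS m (fun x hx => hm x (Multiset.mem_cons_of_mem hx)) ζ hζ)
        h1 h2
      exact hmul.congr (fun ζ _ => by rw [Multiset.map_cons, Multiset.prod_cons])

lemma pow_eq_of_pow_eq {a b : ℝ} (ha : 0 ≤ a) (hb : 0 ≤ b) {n : ℕ} (hn : n ≠ 0)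
    (h : a^n = b^n) : a = b := by
  rcases lt_trichotomy a b with hlt | heq | hgt
  · exact absurd h (ne_of_lt (pow_lt_pow_left₀ hlt ha hn))
  · exact heq
  · exact absurd h.symm (ne_of_lt (pow_lt_pow_left₀ hgt hb hn))

end Sep3

/-- The key one-variable approximation: a polynomial close to 1 on `A` and to 0 on `B`,
when `A` and `B` are separated by the imaginary axis. -/
lemma exists_indicator_poly (ε R : ℝ) (hε : 0 < ε) (hεR : ε ≤ R) (A B : Set ℂ)
    (hA : ∀ ζ ∈ A, Complex.abs ζ ≤ R ∧ ζ.re ≤ -ε)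
    (hB : ∀ ζ ∈ B, Complex.abs ζ ≤ R ∧ ε ≤ ζ.re)
    (δ : ℝ) (hδ : 0 < δ) :
    ∃ f : Polynomial ℂ, (∀ ζ ∈ A, ‖f.eval ζ - 1‖ ≤ δ) ∧ (∀ ζ ∈ B, ‖f.eval ζ‖ ≤ δ) := by
  classical
  set S : Set ℂ := A ∪ B with hSdef
  have hS : SepSet ε R S := by
    intro ζ hζ
    rcases hζ with hζ | hζ
    · exact ⟨(hA ζ hζ).1, le_trans (by linarith [(hA ζ hζ).2]) (neg_le_abs ζ.re)⟩
    · exact ⟨(hB ζ hζ).1, le_trans (hB ζ hζ).2 (le_abs_self ζ.re)⟩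
  set Y : ℝ := R^2 + 1 with hY
  have hY2 : 0 < Y + 2*ε := by positivity
  set ρ : ℝ := (Y - 2*ε) / (Y + 2*ε) with hρ
  have hρ0 : 0 ≤ ρ := by
    apply div_nonneg _ (le_of_lt hY2)
    nlinarith [sq_nonneg (R-1)]
  have hρ1 : ρ < 1 := by
    rw [hρ, div_lt_one hY2]; linarith
  obtain ⟨l₀, hl₀⟩ := exists_pow_lt_of_lt_one (show (0:ℝ) < min (1/2) (δ/4) by positivity) hρ1
  set l : ℕ := max l₀ 1 with hl
  have hl1 : 1 ≤ l := le_max_right _ _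
  have hρl : ρ ^ l ≤ min (1/2) (δ/4) :=
    le_trans (pow_le_pow_of_le_one hρ0 (le_of_lt hρ1) (le_max_left _ _)) (le_of_lt hl₀)
  have hρl2 : ρ ^ l ≤ 1/2 := le_trans hρl (min_le_left _ _)
  have hρl4 : ρ ^ l ≤ δ/4 := le_trans hρl (min_le_right _ _)
  set n : ℕ := 2 * l with hn
  have hn0 : n ≠ 0 := by positivity
  set D : Polynomial ℂ := (Polynomial.X - Polynomial.C 1)^n - (Polynomial.X + Polynomial.C 1)^n
    with hD
  have hDeval : ∀ ζ : ℂ, D.eval ζ = (ζ - 1)^n - (ζ + 1)^n := by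
    intro ζ; simp [hD]
  have hD0 : D ≠ 0 := by
    intro h
    have h1 : ((1:ℂ) - 1)^n - ((1:ℂ) + 1)^n = 0 := by rw [← hDeval 1, h]; simp
    rw [sub_self, zero_pow hn0, zero_sub, neg_eq_zero] at h1
    norm_num at h1
  have hroots : ∀ r ∈ D.roots, r.re = 0 := by
    intro r hr
    have hr0 : D.eval r = 0 := (Polynomial.isRoot_of_mem_roots hr)
    rw [hDeval r] at hr0
    have hpow : (r - 1)^n = (r + 1)^n := by linear_combination hr0
    have habs : Complex.abs (r-1) = Complex.abs (r+1) := by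
      have := congrArg Complex.abs hpow
      rw [map_pow, map_pow] at this
      exact pow_eq_of_pow_eq (Complex.abs.nonneg _) (Complex.abs.nonneg _) hn0 this
    have hsq : Complex.normSq (r-1) = Complex.normSq (r+1) := by
      rw [← Complex.sq_abs, ← Complex.sq_abs, habs]
    rw [Complex.normSq_apply, Complex.normSq_apply] at hsq
    simp only [Complex.sub_re, Complex.sub_im, Complex.add_re, Complex.add_im,
      Complex.one_re, Complex.one_im] at hsq
    nlinarith [hsq]
  have hlc : D.leadingCoeff ≠ 0 := Polynomial.leadingCoeff_ne_zero.mpr hD0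
  have hsplit : D = Polynomial.C D.leadingCoeff * (D.roots.map fun a =>
      Polynomial.X - Polynomial.C a).prod :=
    (IsAlgClosed.splits D).eq_prod_roots
  have hDevalζ : ∀ ζ : ℂ, D.eval ζ = D.leadingCoeff * (D.roots.map fun r => (ζ - r)).prod := by
    intro ζ
    conv_lhs => rw [hsplit]
    rw [Polynomial.eval_mul, Polynomial.eval_C, Polynomial.eval_multiset_prod,
      Multiset.map_map]
    exact congrArg (fun t => D.leadingCoeff * Multiset.prod t)
      (Multiset.map_congr rfl fun r _ => by
        simp only [Function.comp_apply, Polynomial.eval_sub, Polynomial.eval_X, Polynomial.eval_C])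
  have hinv : ∀ ζ : ℂ, (D.eval ζ)⁻¹
      = D.leadingCoeff⁻¹ * (D.roots.map fun r => (ζ - r)⁻¹).prod := by
    intro ζ
    rw [hDevalζ ζ, mul_inv, Multiset.prod_map_inv]
  -- the rational function G
  set G : ℂ → ℂ := fun ζ => (ζ - 1)^n * (D.eval ζ)⁻¹ with hG
  -- pointwise estimates
  have habs_pow : ∀ ζ : ℂ, (Complex.abs ζ)^n = (Complex.normSq ζ)^l := by
    intro ζ
    rw [hn, pow_mul, Complex.sq_abs]
  -- B side
  have hBkey : ∀ ζ : ℂ, Complex.abs ζ ≤ R → ε ≤ ζ.re →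
      (Complex.abs (ζ-1))^n ≤ ρ^l * (Complex.abs (ζ+1))^n := by
    intro ζ hζR hζre
    have hnsq : Complex.normSq ζ ≤ R^2 := by
      rw [← Complex.sq_abs]
      exact pow_le_pow_left₀ (Complex.abs.nonneg ζ) hζR 2
    have key : Complex.normSq (ζ - 1) * (Y + 2*ε) ≤ (Y - 2*ε) * Complex.normSq (ζ + 1) := by
      rw [Complex.normSq_apply, Complex.normSq_apply]
      simp only [Complex.sub_re, Complex.sub_im, Complex.add_re, Complex.add_im,
        Complex.one_re, Complex.one_im]
      have h1 : Complex.normSq ζ = ζ.re^2 + ζ.im^2 := by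
        rw [Complex.normSq_apply]; ring
      nlinarith [hnsq, hζre, hε, hεR, sq_nonneg ζ.im, sq_nonneg ζ.re,
        mul_le_mul_of_nonneg_left (le_trans (by nlinarith : ζ.re^2 + ζ.im^2 + 1 ≤ Y) (le_refl Y)) (le_of_lt hε),
        mul_le_mul_of_nonneg_right hζre (by positivity : (0:ℝ) ≤ Y)]
    have key2 : Complex.normSq (ζ - 1) ≤ ρ * Complex.normSq (ζ + 1) := by
      rw [hρ, div_mul_eq_mul_div, le_div_iff₀ hY2]
      linarith [key]
    rw [habs_pow, habs_pow]
    calc (Complex.normSq (ζ-1))^l ≤ (ρ * Complex.normSq (ζ+1))^l :=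
          pow_le_pow_left₀ (Complex.normSq_nonneg _) key2 l
      _ = ρ^l * (Complex.normSq (ζ+1))^l := mul_pow _ _ _
  have honemore : ∀ ζ : ℂ, Complex.abs ζ ≤ R → ζ.re ≤ -ε →
      (Complex.abs (ζ+1))^n ≤ ρ^l * (Complex.abs (ζ-1))^n := by
    intro ζ hζR hζre
    have h := hBkey (-ζ) (by simpa using hζR) (by simpa using by linarith [hζre] : ε ≤ (-ζ).re)
    have e1 : Complex.abs (-ζ - 1) = Complex.abs (ζ + 1) := by
      rw [show (-ζ - 1 : ℂ) = -(ζ+1) by ring, map_neg_eq_map]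
    have e2 : Complex.abs (-ζ + 1) = Complex.abs (ζ - 1) := by
      rw [show (-ζ + 1 : ℂ) = -(ζ-1) by ring, map_neg_eq_map]
    rw [e1, e2] at h
    exact h
  -- lower bound for the denominator, on both sides
  have hDB : ∀ ζ ∈ B, (1+ε)^n * (1/2) ≤ Complex.abs (D.eval ζ) ∧
      Complex.abs (G ζ) ≤ 2 * ρ^l := by
    intro ζ hζ
    obtain ⟨hζR, hζre⟩ := hB ζ hζ
    have hkey := hBkey ζ hζR hζre
    have hp1 : (1:ℝ) + ε ≤ Complex.abs (ζ + 1) := by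
      have h1 : (ζ + 1).re ≤ Complex.abs (ζ+1) := Complex.re_le_abs _
      have h2 : (ζ+1).re = ζ.re + 1 := by simp
      linarith
    have hPpos : (0:ℝ) < (Complex.abs (ζ+1))^n :=
      lt_of_lt_of_le (by positivity) (pow_le_pow_left₀ (by linarith) hp1 n)
    have hDlow : (Complex.abs (ζ+1))^n * (1 - ρ^l) ≤ Complex.abs (D.eval ζ) := by
      have h3 : (Complex.abs (ζ+1))^n - (Complex.abs (ζ-1))^n ≤ Complex.abs (D.eval ζ) := by
        rw [hDeval ζ]
        have h4 : Complex.abs ((ζ+1)^n) - Complex.abs ((ζ-1)^n)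
            ≤ Complex.abs ((ζ+1)^n - (ζ-1)^n) := by
          exact le_trans (sub_le_iff_le_add.mpr (by
            calc Complex.abs ((ζ+1)^n) = Complex.abs (((ζ+1)^n - (ζ-1)^n) + (ζ-1)^n) := by
                  ring_nf
              _ ≤ Complex.abs ((ζ+1)^n - (ζ-1)^n) + Complex.abs ((ζ-1)^n) := Complex.abs.add_le _ _))
            (le_refl _)
        rw [map_pow, map_pow] at h4
        calc (Complex.abs (ζ+1))^n - (Complex.abs (ζ-1))^n
            ≤ Complex.abs ((ζ+1)^n - (ζ-1)^n) := h4
          _ = Complex.abs ((ζ-1)^n - (ζ+1)^n) := by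
              rw [← map_neg_eq_map]; ring_nf
      nlinarith [hkey]
    have hhalf : (Complex.abs (ζ+1))^n * (1/2) ≤ (Complex.abs (ζ+1))^n * (1 - ρ^l) := by
      apply mul_le_mul_of_nonneg_left _ (le_of_lt hPpos)
      linarith
    constructor
    · calc (1+ε)^n * (1/2) ≤ (Complex.abs (ζ+1))^n * (1/2) := by
            apply mul_le_mul_of_nonneg_right _ (by norm_num)
            exact pow_le_pow_left₀ (by linarith) hp1 n
        _ ≤ Complex.abs (D.eval ζ) := le_trans hhalf hDlow
    · have hDpos : (0:ℝ) < Complex.abs (D.eval ζ) :=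
        lt_of_lt_of_le (by positivity) (le_trans hhalf hDlow)
      rw [hG]
      simp only [map_mul, map_inv₀, map_pow]
      rw [mul_inv_le_iff₀ hDpos]
      calc (Complex.abs (ζ-1))^n ≤ ρ^l * (Complex.abs (ζ+1))^n := hkey
        _ = 2 * ρ^l * ((Complex.abs (ζ+1))^n * (1/2)) := by ring
        _ ≤ 2 * ρ^l * Complex.abs (D.eval ζ) := by
            apply mul_le_mul_of_nonneg_left (le_trans hhalf hDlow) (by positivity)
  have hDA : ∀ ζ ∈ A, (1+ε)^n * (1/2) ≤ Complex.abs (D.eval ζ) ∧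
      Complex.abs (G ζ - 1) ≤ 2 * ρ^l := by
    intro ζ hζ
    obtain ⟨hζR, hζre⟩ := hA ζ hζ
    have hkey := honemore ζ hζR hζre
    have hp1 : (1:ℝ) + ε ≤ Complex.abs (ζ - 1) := by
      have h1 : |(ζ - 1).re| ≤ Complex.abs (ζ-1) := Complex.abs_re_le_abs _
      have h2 : (ζ-1).re = ζ.re - 1 := by simp
      have h3 : |(ζ-1).re| = -(ζ.re - 1) := by
        rw [h2, abs_of_nonpos (by linarith)]
      linarith [h1, h3.symm.le.trans h1]
    have hPpos : (0:ℝ) < (Complex.abs (ζ-1))^n :=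
      lt_of_lt_of_le (by positivity) (pow_le_pow_left₀ (by linarith) hp1 n)
    have hDlow : (Complex.abs (ζ-1))^n * (1 - ρ^l) ≤ Complex.abs (D.eval ζ) := by
      have h4 : Complex.abs ((ζ-1)^n) - Complex.abs ((ζ+1)^n)
          ≤ Complex.abs ((ζ-1)^n - (ζ+1)^n) := by
        exact le_trans (sub_le_iff_le_add.mpr (by
          calc Complex.abs ((ζ-1)^n) = Complex.abs (((ζ-1)^n - (ζ+1)^n) + (ζ+1)^n) := by
                ring_nf
            _ ≤ Complex.abs ((ζ-1)^n - (ζ+1)^n) + Complex.abs ((ζ+1)^n) := Complex.abs.add_le _ _))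
          (le_refl _)
      rw [map_pow, map_pow] at h4
      rw [hDeval ζ]
      nlinarith [hkey]
    have hhalf : (Complex.abs (ζ-1))^n * (1/2) ≤ (Complex.abs (ζ-1))^n * (1 - ρ^l) := by
      apply mul_le_mul_of_nonneg_left _ (le_of_lt hPpos)
      linarith
    have hDpos : (0:ℝ) < Complex.abs (D.eval ζ) :=
      lt_of_lt_of_le (by positivity) (le_trans hhalf hDlow)
    have hDne : D.eval ζ ≠ 0 := by
      intro h; rw [h] at hDpos; simp at hDpos
    constructor
    · calc (1+ε)^n * (1/2) ≤ (Complex.abs (ζ-1))^n * (1/2) := by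
            apply mul_le_mul_of_nonneg_right _ (by norm_num)
            exact pow_le_pow_left₀ (by linarith) hp1 n
        _ ≤ Complex.abs (D.eval ζ) := le_trans hhalf hDlow
    · have hG1 : G ζ - 1 = (ζ+1)^n * (D.eval ζ)⁻¹ := by
        rw [hG]
        field_simp
        linear_combination -hDeval ζ
      rw [hG1]
      simp only [map_mul, map_inv₀, map_pow]
      rw [mul_inv_le_iff₀ hDpos]
      calc (Complex.abs (ζ+1))^n ≤ ρ^l * (Complex.abs (ζ-1))^n := hkey
        _ = 2 * ρ^l * ((Complex.abs (ζ-1))^n * (1/2)) := by ring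
        _ ≤ 2 * ρ^l * Complex.abs (D.eval ζ) := by
            apply mul_le_mul_of_nonneg_left (le_trans hhalf hDlow) (by positivity)
  -- G is approximable on S
  have hGinv_b : ∀ ζ ∈ S, ‖(D.eval ζ)⁻¹‖ ≤ 2 := by
    intro ζ hζ
    have hged : (1+ε)^n * (1/2) ≤ Complex.abs (D.eval ζ) := by
      rcases hζ with h | h
      · exact (hDA ζ h).1
      · exact (hDB ζ h).1
    have hone : (1:ℝ) ≤ (1+ε)^n := one_le_pow₀ (by linarith)
    have h1 : (1:ℝ)/2 ≤ Complex.abs (D.eval ζ) := by nlinarith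
    have h2 : ‖D.eval ζ‖ = Complex.abs (D.eval ζ) := Complex.norm_eq_abs _
    rw [norm_inv, h2, inv_le_comm₀ (by linarith) (by norm_num)]
    linarith
  have hGap : PApprox S G := by
    have h1 : PApprox S (fun ζ => (ζ - 1:ℂ)^n) := by
      have := papprox_poly S ((Polynomial.X - Polynomial.C 1)^n)
      exact this.congr (fun ζ _ => by simp)
    have h2 : PApprox S (fun ζ => (D.eval ζ)⁻¹) := by
      have hsm := PApprox.smul (S := S) D.leadingCoeff⁻¹
        (papprox_msprod hε hεR hS D.roots hroots)
      exact hsm.congr (fun ζ _ => (hinv ζ).symm)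
    have hb1 : ∀ ζ ∈ S, ‖(ζ - 1:ℂ)^n‖ ≤ (R+1)^n := by
      intro ζ hζ
      rw [norm_pow]
      apply pow_le_pow_left₀ (norm_nonneg _)
      calc ‖ζ - 1‖ ≤ ‖ζ‖ + ‖(1:ℂ)‖ := norm_sub_le _ _
        _ ≤ R + 1 := by
            have := (hS ζ hζ).1
            simp only [norm_one]
            exact add_le_add this (le_refl 1)
    exact (PApprox.mul hb1 hGinv_b h1 h2).congr (fun ζ _ => rfl)
  obtain ⟨f, hf⟩ := hGap (δ/2) (by positivity)
  refine ⟨f, fun ζ hζ => ?_, fun ζ hζ => ?_⟩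
  · have h1 := hf ζ (Or.inl hζ)
    have h2 := (hDA ζ hζ).2
    calc ‖f.eval ζ - 1‖ = ‖(G ζ - 1) - (G ζ - f.eval ζ)‖ := by ring_nf
      _ ≤ ‖G ζ - 1‖ + ‖G ζ - f.eval ζ‖ := norm_sub_le _ _
      _ ≤ 2 * ρ^l + δ/2 := add_le_add h2 h1
      _ ≤ δ := by linarith [hρl4]
  · have h1 := hf ζ (Or.inr hζ)
    have h2 := (hDB ζ hζ).2
    calc ‖f.eval ζ‖ = ‖G ζ - (G ζ - f.eval ζ)‖ := by ring_nf
      _ ≤ ‖G ζ‖ + ‖G ζ - f.eval ζ‖ := norm_sub_le _ _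
      _ ≤ 2 * ρ^l + δ/2 := add_le_add h2 h1
      _ ≤ δ := by linarith [hρl4]


/-- The polynomial hull of a compact subset of `ℂ^N`. -/
def polyHull (N : ℕ) (K : Set (EuclideanSpace ℂ (Fin N))) : Set (EuclideanSpace ℂ (Fin N)) :=
  {z | ∀ P : MvPolynomial (Fin N) ℂ, ∀ M : ℝ,
    (∀ w ∈ K, ‖MvPolynomial.eval (fun i => w i) P‖ ≤ M) →
      ‖MvPolynomial.eval (fun i => z i) P‖ ≤ M}

lemma subset_polyHull (N : ℕ) (K : Set (EuclideanSpace ℂ (Fin N))) : K ⊆ polyHull N K :=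
  fun z hz P M h => h z hz

lemma eval_aeval {N : ℕ} (x : Fin N → ℂ) (L : MvPolynomial (Fin N) ℂ) (q : Polynomial ℂ) :
    MvPolynomial.eval x (Polynomial.aeval L q) = q.eval (MvPolynomial.eval x L) := by
  induction q using Polynomial.induction_on' with
  | add p q hp hq => simp [map_add, hp, hq]
  | monomial k a =>
      rw [Polynomial.aeval_monomial, Polynomial.eval_monomial]
      simp [map_mul, map_pow]

lemma continuous_mvEval {N : ℕ} (P : MvPolynomial (Fin N) ℂ) :
    Continuous fun w : EuclideanSpace ℂ (Fin N) => MvPolynomial.eval (fun i => w i) P := by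
  apply (MvPolynomial.continuous_eval P).comp
  exact continuous_pi fun i => (continuous_apply i).comp (PiLp.continuous_ofLp 2 _)

lemma norm_le_of_polyHull {N : ℕ} {K : Set (EuclideanSpace ℂ (Fin N))}
    {z : EuclideanSpace ℂ (Fin N)} (hz : z ∈ polyHull N K)
    (L : MvPolynomial (Fin N) ℂ) (q : Polynomial ℂ) (M : ℝ)
    (h : ∀ w ∈ K, ‖q.eval (MvPolynomial.eval (fun i => w i) L)‖ ≤ M) :
    ‖q.eval (MvPolynomial.eval (fun i => z i) L)‖ ≤ M := by
  have := hz (Polynomial.aeval L q) M (fun w hw => by rw [eval_aeval]; exact h w hw)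
  rwa [eval_aeval] at this

lemma kallin {N : ℕ} {A B : Set (EuclideanSpace ℂ (Fin N))}
    (hAc : IsCompact A) (hBc : IsCompact B)
    (hApc : polyHull N A = A) (hBpc : polyHull N B = B)
    (L : MvPolynomial (Fin N) ℂ)
    (hLA : ∀ w ∈ A, (MvPolynomial.eval (fun i => w i) L).re < 0)
    (hLB : ∀ w ∈ B, 0 < (MvPolynomial.eval (fun i => w i) L).re) :
    polyHull N (A ∪ B) = A ∪ B := by
  classical
  rcases A.eq_empty_or_nonempty with rfl | hAne
  · simpa using hBpc
  rcases B.eq_empty_or_nonempty with rfl | hBne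
  · simpa using hApc
  refine Subset.antisymm ?_ (subset_polyHull N _)
  set ev : EuclideanSpace ℂ (Fin N) → ℂ := fun w => MvPolynomial.eval (fun i => w i) L with hev
  have hevc : Continuous ev := continuous_mvEval L
  -- separation constants
  obtain ⟨wA, hwA, hmaxA⟩ := hAc.exists_isMaxOn hAne (Complex.continuous_re.comp hevc).continuousOn
  obtain ⟨wB, hwB, hminB⟩ := hBc.exists_isMinOn hBne (Complex.continuous_re.comp hevc).continuousOn
  set εA : ℝ := -((ev wA).re) with hεA
  set εB : ℝ := (ev wB).re with hεB
  have hεApos : 0 < εA := by have := hLA wA hwA; simp only [hεA]; linarith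
  have hεBpos : 0 < εB := hLB wB hwB
  set ε : ℝ := min εA εB with hε'
  have hεpos : 0 < ε := lt_min hεApos hεBpos
  obtain ⟨R₀, hR₀⟩ := (hAc.union hBc).exists_bound_of_continuousOn hevc.continuousOn
  set R : ℝ := max R₀ ε with hR'
  have hεR : ε ≤ R := le_max_right _ _
  have hA' : ∀ ζ ∈ ev '' A, Complex.abs ζ ≤ R ∧ ζ.re ≤ -ε := by
    rintro ζ ⟨w, hw, rfl⟩
    refine ⟨le_trans (hR₀ w (Or.inl hw)) (le_max_left _ _), ?_⟩
    have h1 : (ev w).re ≤ (ev wA).re := hmaxA hw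
    have h2 : ε ≤ εA := min_le_left _ _
    simp only [hεA] at h2 ⊢
    linarith
  have hB' : ∀ ζ ∈ ev '' B, Complex.abs ζ ≤ R ∧ ε ≤ ζ.re := by
    rintro ζ ⟨w, hw, rfl⟩
    refine ⟨le_trans (hR₀ w (Or.inr hw)) (le_max_left _ _), ?_⟩
    have h1 : (ev wB).re ≤ (ev w).re := hminB hw
    have h2 : ε ≤ εB := min_le_right _ _
    linarith
  intro z hz
  by_contra hnz
  obtain ⟨hzA, hzB⟩ : z ∉ A ∧ z ∉ B := ⟨fun h => hnz (Or.inl h), fun h => hnz (Or.inr h)⟩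
  rw [← hApc] at hzA
  rw [← hBpc] at hzB
  simp only [polyHull, mem_setOf_eq, not_forall] at hzA hzB
  obtain ⟨P₁, M₁, hP₁A, hP₁z⟩ := hzA
  obtain ⟨P₂, M₂, hP₂B, hP₂z⟩ := hzB
  push_neg at hP₁z hP₂z
  -- auxiliary bounds
  have hM₁0 : 0 ≤ M₁ := by
    obtain ⟨w₀, hw₀⟩ := hAne
    exact le_trans (norm_nonneg _) (hP₁A w₀ hw₀)
  have hM₂0 : 0 ≤ M₂ := by
    obtain ⟨w₀, hw₀⟩ := hBne
    exact le_trans (norm_nonneg _) (hP₂B w₀ hw₀)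
  obtain ⟨M₁'₀, hM₁'₀⟩ := hBc.exists_bound_of_continuousOn (continuous_mvEval P₁).continuousOn
  obtain ⟨M₂'₀, hM₂'₀⟩ := hAc.exists_bound_of_continuousOn (continuous_mvEval P₂).continuousOn
  set M₁' : ℝ := max M₁'₀ 0 with hM₁'def
  set M₂' : ℝ := max M₂'₀ 0 with hM₂'def
  have hM₁' : ∀ w ∈ B, ‖MvPolynomial.eval (fun i => w i) P₁‖ ≤ M₁' :=
    fun w hw => le_trans (hM₁'₀ w hw) (le_max_left _ _)
  have hM₂' : ∀ w ∈ A, ‖MvPolynomial.eval (fun i => w i) P₂‖ ≤ M₂' :=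
    fun w hw => le_trans (hM₂'₀ w hw) (le_max_left _ _)
  have hM₁'0 : 0 ≤ M₁' := le_max_right _ _
  have hM₂'0 : 0 ≤ M₂' := le_max_right _ _
  set d₁ : ℝ := ‖MvPolynomial.eval (fun i => z i) P₁‖ - M₁ with hd₁
  set d₂ : ℝ := ‖MvPolynomial.eval (fun i => z i) P₂‖ - M₂ with hd₂
  have hd₁pos : 0 < d₁ := by simp only [hd₁]; linarith
  have hd₂pos : 0 < d₂ := by simp only [hd₂]; linarith
  set δ : ℝ := min (1/8) (min (d₁/(5*M₁+4*d₁+1)) (min ((M₁+d₁)/(2*(M₁'+1)))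
    (min (d₂/(5*M₂+4*d₂+1)) ((M₂+d₂)/(2*(M₂'+1)))))) with hδdef
  have hδpos : 0 < δ := by
    refine lt_min (by norm_num) (lt_min (by positivity) (lt_min (by positivity)
      (lt_min (by positivity) (by positivity))))
  have hδ18 : δ ≤ 1/8 := min_le_left _ _
  have hδ1 : δ * (5*M₁+4*d₁+1) ≤ d₁ := by
    have h : δ ≤ d₁/(5*M₁+4*d₁+1) := le_trans (min_le_right _ _) (min_le_left _ _)
    calc δ * (5*M₁+4*d₁+1) ≤ (d₁/(5*M₁+4*d₁+1)) * (5*M₁+4*d₁+1) :=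
          mul_le_mul_of_nonneg_right h (by positivity)
      _ = d₁ := by field_simp
  have hδ2 : δ * (2*(M₁'+1)) ≤ M₁+d₁ := by
    have h : δ ≤ (M₁+d₁)/(2*(M₁'+1)) :=
      le_trans (min_le_right _ _) (le_trans (min_le_right _ _) (min_le_left _ _))
    calc δ * (2*(M₁'+1)) ≤ ((M₁+d₁)/(2*(M₁'+1))) * (2*(M₁'+1)) :=
          mul_le_mul_of_nonneg_right h (by positivity)
      _ = M₁+d₁ := by field_simp
  have hδ3 : δ * (5*M₂+4*d₂+1) ≤ d₂ := by
    have h : δ ≤ d₂/(5*M₂+4*d₂+1) :=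
      le_trans (min_le_right _ _) (le_trans (min_le_right _ _)
        (le_trans (min_le_right _ _) (min_le_left _ _)))
    calc δ * (5*M₂+4*d₂+1) ≤ (d₂/(5*M₂+4*d₂+1)) * (5*M₂+4*d₂+1) :=
          mul_le_mul_of_nonneg_right h (by positivity)
      _ = d₂ := by field_simp
  have hδ4 : δ * (2*(M₂'+1)) ≤ M₂+d₂ := by
    have h : δ ≤ (M₂+d₂)/(2*(M₂'+1)) :=
      le_trans (min_le_right _ _) (le_trans (min_le_right _ _)
        (le_trans (min_le_right _ _) (min_le_right _ _)))
    calc δ * (2*(M₂'+1)) ≤ ((M₂+d₂)/(2*(M₂'+1))) * (2*(M₂'+1)) :=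
          mul_le_mul_of_nonneg_right h (by positivity)
      _ = M₂+d₂ := by field_simp
  obtain ⟨f, hf1, hf0⟩ := exists_indicator_poly ε R hεpos hεR (ev '' A) (ev '' B) hA' hB' δ hδpos
  set v : ℂ := f.eval (ev z) with hv
  -- the dichotomy
  have hfA : ∀ w ∈ A, ‖f.eval (ev w) - 1‖ ≤ δ := fun w hw => hf1 _ ⟨w, hw, rfl⟩
  have hfB : ∀ w ∈ B, ‖f.eval (ev w)‖ ≤ δ := fun w hw => hf0 _ ⟨w, hw, rfl⟩
  have hfAb : ∀ w ∈ A, ‖f.eval (ev w)‖ ≤ 1 + δ := by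
    intro w hw
    calc ‖f.eval (ev w)‖ = ‖(f.eval (ev w) - 1) + 1‖ := by ring_nf
      _ ≤ ‖f.eval (ev w) - 1‖ + ‖(1:ℂ)‖ := norm_add_le _ _
      _ ≤ 1 + δ := by simp only [norm_one]; linarith [hfA w hw]
  have hfBb : ∀ w ∈ B, ‖f.eval (ev w) - 1‖ ≤ 1 + δ := by
    intro w hw
    calc ‖f.eval (ev w) - 1‖ ≤ ‖f.eval (ev w)‖ + ‖(1:ℂ)‖ := norm_sub_le _ _
      _ ≤ 1 + δ := by simp only [norm_one]; linarith [hfB w hw]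
  have hdich : ‖v‖ * ‖v - 1‖ ≤ 2*δ := by
    have key := norm_le_of_polyHull hz L (f * (f - 1)) (2*δ) ?_
    · rw [Polynomial.eval_mul, Polynomial.eval_sub, Polynomial.eval_one, norm_mul] at key
      exact key
    · intro w hw
      rw [Polynomial.eval_mul, Polynomial.eval_sub, Polynomial.eval_one, norm_mul]
      rcases hw with hw | hw
      · have := hfA w hw; have := hfAb w hw
        nlinarith [norm_nonneg (f.eval (ev w)), norm_nonneg (f.eval (ev w) - 1), hδ18]
      · have := hfB w hw; have := hfBb w hw
        nlinarith [norm_nonneg (f.eval (ev w)), norm_nonneg (f.eval (ev w) - 1), hδ18]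
  rcases le_or_gt ‖v - 1‖ (1/2) with hcase | hcase
  · -- v is near 1 : contradict the bound for P₁
    have honev : (1:ℝ) ≤ ‖v‖ + ‖v - 1‖ := by
      have h := norm_sub_le v (v - 1)
      simp only [sub_sub_cancel] at h
      simpa using h
    have hvlow : 1 - 4*δ ≤ ‖v‖ := by
      have h1 : 1 - ‖v-1‖ ≤ ‖v‖ := by linarith
      have h2 : ‖v - 1‖ ≤ 4*δ := by
        nlinarith [hdich, hcase, norm_nonneg (v-1),
          mul_le_mul_of_nonneg_right (show 1 - ‖v-1‖ ≤ ‖v‖ by linarith) (norm_nonneg (v-1))]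
      linarith
    have key := hz (P₁ * Polynomial.aeval L f) (max (M₁*(1+δ)) (M₁'*δ)) ?_
    · rw [map_mul, eval_aeval] at key
      rw [norm_mul] at key
      have hlhs : (M₁ + d₁) * (1 - 4*δ) ≤
          ‖MvPolynomial.eval (fun i => z i) P₁‖ * ‖f.eval (MvPolynomial.eval (fun i => z i) L)‖ := by
        have he : ‖MvPolynomial.eval (fun i => z i) P₁‖ = M₁ + d₁ := by
          simp only [hd₁]; ring
        rw [he]
        apply mul_le_mul_of_nonneg_left _ (by linarith)
        exact hvlow
      have hmax := le_max_iff.mp (le_trans hlhs key)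
      rcases hmax with h | h
      · nlinarith [hδ1, hδ18, hd₁pos, hM₁0]
      · nlinarith [hδ2, hδ18, hd₁pos, hM₁0, hM₁'0, hδpos]
    · intro w hw
      rw [map_mul, eval_aeval, norm_mul]
      rcases hw with hw | hw
      · refine le_trans ?_ (le_max_left _ _)
        exact mul_le_mul (hP₁A w hw) (hfAb w hw) (norm_nonneg _) hM₁0
      · refine le_trans ?_ (le_max_right _ _)
        exact mul_le_mul (hM₁' w hw) (hfB w hw) (norm_nonneg _) hM₁'0
  · -- v is near 0 : contradict the bound for P₂
    have honev : (1:ℝ) ≤ ‖v‖ + ‖v - 1‖ := by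
      have h := norm_sub_le v (v - 1)
      simp only [sub_sub_cancel] at h
      simpa using h
    have hvlow : 1 - 4*δ ≤ ‖v - 1‖ := by
      have h2 : ‖v‖ ≤ 4*δ := by nlinarith [hdich, hcase, norm_nonneg v]
      linarith
    have key := hz (P₂ * Polynomial.aeval L (1 - f)) (max (M₂*(1+δ)) (M₂'*δ)) ?_
    · rw [map_mul, eval_aeval, norm_mul] at key
      have heval1f : ∀ ζ : ℂ, (1 - f : Polynomial ℂ).eval ζ = 1 - f.eval ζ := by
        intro ζ; simp
      have hlhs : (M₂ + d₂) * (1 - 4*δ) ≤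
          ‖MvPolynomial.eval (fun i => z i) P₂‖ *
            ‖(1 - f : Polynomial ℂ).eval (MvPolynomial.eval (fun i => z i) L)‖ := by
        have he : ‖MvPolynomial.eval (fun i => z i) P₂‖ = M₂ + d₂ := by
          simp only [hd₂]; ring
        rw [he, heval1f]
        apply mul_le_mul_of_nonneg_left _ (by linarith)
        calc (1:ℝ) - 4*δ ≤ ‖v - 1‖ := hvlow
          _ = ‖1 - v‖ := by rw [norm_sub_rev]
          _ = ‖1 - f.eval (MvPolynomial.eval (fun i => z i) L)‖ := by rw [hv]
      have hmax := le_max_iff.mp (le_trans hlhs key)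
      rcases hmax with h | h
      · nlinarith [hδ3, hδ18, hd₂pos, hM₂0]
      · nlinarith [hδ4, hδ18, hd₂pos, hM₂0, hM₂'0, hδpos]
    · intro w hw
      rw [map_mul, eval_aeval, norm_mul]
      have heval1f : ∀ ζ : ℂ, (1 - f : Polynomial ℂ).eval ζ = 1 - f.eval ζ := by
        intro ζ; simp
      rcases hw with hw | hw
      · refine le_trans ?_ (le_max_right _ _)
        rw [heval1f]
        have h1 : ‖1 - f.eval (ev w)‖ ≤ δ := by
          rw [norm_sub_rev]; exact hfA w hw
        exact mul_le_mul (hM₂' w hw) h1 (norm_nonneg _) hM₂'0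
      · refine le_trans ?_ (le_max_left _ _)
        rw [heval1f]
        have h1 : ‖1 - f.eval (ev w)‖ ≤ 1 + δ := by
          rw [norm_sub_rev]; exact hfBb w hw
        exact mul_le_mul (hP₂B w hw) h1 (norm_nonneg _) hM₂0

lemma polyHull_empty (N : ℕ) : polyHull N (∅ : Set (EuclideanSpace ℂ (Fin N))) ⊆ ∅ := by
  intro z hz
  exfalso
  have h := hz 1 (-1) (fun w hw => absurd hw (notMem_empty w))
  rw [map_one, norm_one] at h
  linarith

lemma exists_sep_poly {N : ℕ} (φ : EuclideanSpace ℂ (Fin N) →ₗ[ℝ] ℝ) (t : ℝ) :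
    ∃ L : MvPolynomial (Fin N) ℂ, ∀ w : EuclideanSpace ℂ (Fin N),
      (MvPolynomial.eval (fun i => w i) L).re = φ w - t := by
  classical
  set c : Fin N → ℂ := fun j => ((φ (EuclideanSpace.single j 1) : ℝ) : ℂ)
    - ((φ (EuclideanSpace.single j Complex.I) : ℝ) : ℂ) * Complex.I with hc
  refine ⟨(∑ j, MvPolynomial.C (c j) * MvPolynomial.X j) - MvPolynomial.C (t:ℂ), fun w => ?_⟩
  have heval : MvPolynomial.eval (fun i => w i)
      ((∑ j, MvPolynomial.C (c j) * MvPolynomial.X j) - MvPolynomial.C (t:ℂ))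
      = (∑ j, c j * w j) - (t:ℂ) := by
    rw [map_sub, map_sum, MvPolynomial.eval_C]
    congr 1
    refine Finset.sum_congr rfl fun j _ => ?_
    rw [map_mul, MvPolynomial.eval_C, MvPolynomial.eval_X]
  rw [heval]
  have hdecomp : w = ∑ j, (((w j).re : ℝ) • EuclideanSpace.single j (1:ℂ)
      + ((w j).im : ℝ) • EuclideanSpace.single j Complex.I) := by
    ext i
    rw [WithLp.ofLp_sum, Finset.sum_apply]
    rw [Finset.sum_eq_single i]
    · simp [EuclideanSpace.single_apply, Complex.real_smul, Complex.re_add_im]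
    · intro j _ hj
      simp [EuclideanSpace.single_apply, hj, Ne.symm hj]
    · intro h
      exact absurd (Finset.mem_univ i) h
  have hφw : φ w = ∑ j, ((w j).re * φ (EuclideanSpace.single j 1)
      + (w j).im * φ (EuclideanSpace.single j Complex.I)) := by
    conv_lhs => rw [hdecomp]
    rw [map_sum]
    refine Finset.sum_congr rfl fun j _ => ?_
    rw [map_add, LinearMap.map_smul, LinearMap.map_smul, smul_eq_mul, smul_eq_mul]
  rw [Complex.sub_re, Complex.ofReal_re, Complex.re_sum, hφw]
  congr 1
  refine Finset.sum_congr rfl fun j _ => ?_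
  simp only [hc, Complex.sub_re, Complex.mul_re, Complex.mul_im, Complex.I_re, Complex.I_im,
    Complex.ofReal_re, Complex.ofReal_im, Complex.sub_im]
  ring

lemma hull_union_eq (N : ℕ) : ∀ (n : ℕ) (K : Fin n → Set (EuclideanSpace ℂ (Fin N))),
    (∀ i, IsCompact (K i)) → (∀ i, polyHull N (K i) = K i) →
    (∀ i : Fin n, ∃ φ : EuclideanSpace ℂ (Fin N) →ₗ[ℝ] ℝ, φ ≠ 0 ∧ ∃ t : ℝ,
      (∀ x ∈ K i, φ x < t) ∧ (∀ y ∈ ⋃ j : Fin n, ⋃ _ : j < i, K j, t < φ y)) →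
    polyHull N (⋃ i, K i) = ⋃ i, K i := by
  intro n
  induction n with
  | zero =>
      intro K _ _ _
      have h0 : (⋃ i : Fin 0, K i) = ∅ := iUnion_of_empty K
      rw [h0]
      exact Subset.antisymm (polyHull_empty N) (empty_subset _)
  | succ n ih =>
      intro K hKc hKpc hsep
      set K' : Fin n → Set (EuclideanSpace ℂ (Fin N)) := fun i => K i.castSucc with hK'
      have hL : polyHull N (⋃ i, K' i) = ⋃ i, K' i := by
        refine ih K' (fun i => hKc _) (fun i => hKpc _) ?_
        intro i
        obtain ⟨φ, hφ, t, h1, h2⟩ := hsep i.castSucc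
        refine ⟨φ, hφ, t, h1, ?_⟩
        intro y hy
        apply h2
        simp only [mem_iUnion] at hy ⊢
        obtain ⟨j, hj, hyj⟩ := hy
        exact ⟨j.castSucc, Fin.castSucc_lt_castSucc_iff.mpr hj, hyj⟩
      obtain ⟨φ, hφ, t, h1, h2⟩ := hsep (Fin.last n)
      set Lset : Set (EuclideanSpace ℂ (Fin N)) := ⋃ i : Fin n, K' i with hLset
      have hbridge : (⋃ j : Fin (n+1), ⋃ _ : j < Fin.last n, K j) = Lset := by
        ext x
        simp only [mem_iUnion, hLset]
        constructor
        · rintro ⟨j, hj, hx⟩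
          obtain ⟨i, rfl⟩ := Fin.exists_castSucc_eq.mpr (ne_of_lt hj)
          exact ⟨i, hx⟩
        · rintro ⟨i, hx⟩
          exact ⟨i.castSucc, Fin.castSucc_lt_last i, hx⟩
      obtain ⟨Lt, hLt⟩ := exists_sep_poly φ t
      have huni : (⋃ i, K i) = K (Fin.last n) ∪ Lset := by
        ext x
        simp only [mem_union, mem_iUnion, hLset]
        constructor
        · rintro ⟨i, hx⟩
          rcases eq_or_ne i (Fin.last n) with rfl | hne
          · exact Or.inl hx
          · obtain ⟨j, rfl⟩ := Fin.exists_castSucc_eq.mpr hne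
            exact Or.inr ⟨j, hx⟩
        · rintro (hx | ⟨j, hx⟩)
          · exact ⟨Fin.last n, hx⟩
          · exact ⟨j.castSucc, hx⟩
      rw [huni]
      refine kallin (hKc _) (isCompact_iUnion fun i => hKc _) (hKpc _) hL Lt ?_ ?_
      · intro w hw
        rw [hLt w]
        linarith [h1 w hw]
      · intro w hw
        rw [hLt w]
        have := h2 w (hbridge ▸ hw)
        linarith

/-- If each compact polynomially convex set `K i` is separated by a real affine hyperplane
from the union of the previous ones, then the total union is polynomially convex. -/
theorem union_polynomially_convex_of_hyperplane_separated (N n : ℕ)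
    (K : Fin n → Set (EuclideanSpace ℂ (Fin N)))
    (hKc : ∀ i, IsCompact (K i)) (hKpc : ∀ i, polyHull N (K i) = K i)
    (hsep : ∀ i : Fin n, ∃ φ : EuclideanSpace ℂ (Fin N) →ₗ[ℝ] ℝ, φ ≠ 0 ∧ ∃ t : ℝ,
      (∀ x ∈ K i, φ x < t) ∧ (∀ y ∈ ⋃ j : Fin n, ⋃ _ : j < i, K j, t < φ y)) :
    polyHull N (⋃ i, K i) = ⋃ i, K i := hull_union_eq N n K hKc hKpc hsep


end
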